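/- arXiv:2309.14583 — 3 statements merged into one kernel-verified Lean document; each statement's English description precedes it below -/
import Mathlib

section
/- In the scalar SIR model, if β x(0) ≤ γ and y(0) > 0 and x(0) > 0, then y(t) is strictly decreasing for all t ≥ 0. -/
open Set intervalIntegral MeasureTheory

private lemma primitive_hasDerivWithinAt {f : ℝ → ℝ} (hf : ContinuousOn f (Set.Ici 0))
    {b : ℝ} (hb : 0 ≤ b) :
    HasDerivWithinAt (fun u => ∫ s in (0:ℝ)..u, f s) (f b) (Set.Ici b) b := by
  have hsub : Set.uIcc (0:ℝ) b ⊆ Set.Ici 0 := by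
    rw [Set.uIcc_of_le hb]; exact fun u hu => hu.1
  refine intervalIntegral.integral_hasDerivWithinAt_right (t := Set.Ioi b)
    ((hf.mono hsub).intervalIntegrable) ?_ ?_
  · exact ⟨Set.Ici 0, Filter.mem_of_superset self_mem_nhdsWithin
      (fun u (hu : u ∈ Set.Ioi b) => le_trans hb (le_of_lt hu)),
      hf.aestronglyMeasurable measurableSet_Ici⟩
  · exact (hf b hb).mono (fun u (hu : u ∈ Set.Ioi b) => le_trans hb (le_of_lt hu))

private lemma exp_const_trick {f g : ℝ → ℝ}
    (hgc : ContinuousOn g (Set.Ici 0)) (hfc : ContinuousOn f (Set.Ici 0))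
    (hder : ∀ t ∈ Set.Ici (0:ℝ), HasDerivAt g (f t * g t) t)
    {T : ℝ} (hT : 0 ≤ T) :
    g T = g 0 * Real.exp (∫ s in (0:ℝ)..T, f s) := by
  set F : ℝ → ℝ := fun u => ∫ s in (0:ℝ)..u, f s with hF
  have hFcont : ContinuousOn F (Set.Icc 0 T) := by
    have : IntegrableOn f (Set.uIcc 0 T) := by
      rw [Set.uIcc_of_le hT]
      exact (hfc.mono (fun u hu => hu.1)).integrableOn_Icc
    simpa [Set.uIcc_of_le hT] using intervalIntegral.continuousOn_primitive_interval this
  have key : ∀ u ∈ Set.Icc (0:ℝ) T,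
      g u * Real.exp (-F u) = g 0 * Real.exp (-F 0) := by
    apply constant_of_has_deriv_right_zero
    · exact ((hgc.mono (fun u hu => hu.1)).mul (hFcont.neg.rexp))
    · intro u hu
      have h1 : HasDerivWithinAt g (f u * g u) (Set.Ici u) u :=
        (hder u hu.1).hasDerivWithinAt
      have h2 : HasDerivWithinAt F (f u) (Set.Ici u) u :=
        primitive_hasDerivWithinAt hfc hu.1
      have h3 := (h2.neg).exp
      have h4 := h1.mul h3
      convert h4 using 1
      · rfl
      · rfl
      ring
  have hTk := key T ⟨hT, le_rfl⟩
  have hF0 : F 0 = 0 := intervalIntegral.integral_same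
  rw [hF0] at hTk
  have he : Real.exp (-F T) ≠ 0 := (Real.exp_pos _).ne'
  field_simp at hTk
  rw [neg_zero, Real.exp_zero, mul_one] at hTk
  rw [← hTk, mul_assoc, ← Real.exp_add]
  simp [hF]

theorem stmt_1 (β γ : ℝ) (hβ : 0 < β) (hγ : 0 < γ)
    (x y : ℝ → ℝ)
    (hx : ∀ t ∈ Set.Ici (0:ℝ), HasDerivAt x (-β * x t * y t) t)
    (hy : ∀ t ∈ Set.Ici (0:ℝ), HasDerivAt y ((β * x t - γ) * y t) t)
    (hx0 : 0 < x 0) (hy0 : 0 < y 0) (hsum : x 0 + y 0 ≤ 1)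
    (hcrit : β * x 0 ≤ γ) :
    StrictAntiOn y (Set.Ici (0:ℝ)) := by
  have hxc : ContinuousOn x (Set.Ici 0) :=
    fun t ht => ((hx t ht).continuousAt).continuousWithinAt
  have hyc : ContinuousOn y (Set.Ici 0) :=
    fun t ht => ((hy t ht).continuousAt).continuousWithinAt
  -- y is positive
  have hfc : ContinuousOn (fun t => β * x t - γ) (Set.Ici 0) :=
    (continuousOn_const.mul hxc).sub continuousOn_const
  have hypos : ∀ t ∈ Set.Ici (0:ℝ), 0 < y t := by
    intro T hT
    have := exp_const_trick hyc hfc (fun t ht => hy t ht) hT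
    rw [this]
    exact mul_pos hy0 (Real.exp_pos _)
  -- x is strictly smaller than x 0 for t > 0
  have hxeq : ∀ T ∈ Set.Ici (0:ℝ),
      x T = x 0 * Real.exp (∫ s in (0:ℝ)..T, (-β * y s)) := by
    intro T hT
    exact exp_const_trick hxc (continuousOn_const.mul hyc)
      (fun t ht => by have h := hx t ht; convert h using 1; simp only [Pi.mul_apply]; ring) hT
  have hxlt : ∀ t, 0 < t → β * x t < γ := by
    intro t ht
    have hint : (0:ℝ) < ∫ s in (0:ℝ)..t, y s := by
      apply intervalIntegral.intervalIntegral_pos_of_pos_on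
      · exact (hyc.mono (by rw [Set.uIcc_of_le ht.le]; exact fun u hu => hu.1)).intervalIntegrable
      · exact fun s hs => hypos s (le_of_lt hs.1)
      · exact ht
    have hneg : (∫ s in (0:ℝ)..t, (-β * y s)) < 0 := by
      have : (∫ s in (0:ℝ)..t, (-β * y s)) = -β * ∫ s in (0:ℝ)..t, y s := by
        simp [intervalIntegral.integral_const_mul]
      rw [this]
      exact mul_neg_of_neg_of_pos (neg_neg_iff_pos.mpr hβ) hint
    have hexp : Real.exp (∫ s in (0:ℝ)..t, (-β * y s)) < 1 := by
      rw [← Real.exp_zero]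
      exact Real.exp_lt_exp.mpr hneg
    have hxt : x t < x 0 := by
      rw [hxeq t ht.le]
      nlinarith
    nlinarith
  -- conclude
  apply strictAntiOn_of_deriv_neg (convex_Ici 0) hyc
  intro t ht
  rw [interior_Ici] at ht
  rw [(hy t (Set.mem_Ici.mpr (le_of_lt ht))).deriv]
  exact mul_neg_of_neg_of_pos (by linarith [hxlt t ht]) (hypos t (Set.mem_Ici.mpr (le_of_lt ht)))
end

section
/- For the rank-1 network SIR model, each quantity h_i = x_i · exp(-a_i(x̄ + ȳ)/γ) is an invariant of motion, i.e., its time derivative along solutions is zero. -/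
theorem stmt_3 (n : ℕ) (a b : Fin n → ℝ) (ha : ∀ i, 0 < a i) (hb : ∀ i, 0 < b i)
    (γ : ℝ) (hγ : 0 < γ)
    (x y : ℝ → Fin n → ℝ)
    (hx : ∀ i t, HasDerivAt (fun s => x s i)
        (-(a i) * x t i * (∑ j, b j * y t j)) t)
    (hy : ∀ i t, HasDerivAt (fun s => y s i)
        (a i * x t i * (∑ j, b j * y t j) - γ * y t i) t) :
    ∀ i t, HasDerivAt
      (fun s => x s i *
        Real.exp (-(a i) * ((∑ j, b j * x s j) + (∑ j, b j * y s j)) / γ)) 0 t := by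
  intro i t
  set Y := ∑ j, b j * y t j with hY
  have hS : HasDerivAt (fun s => (∑ j, b j * x s j) + (∑ j, b j * y s j)) (-γ * Y) t := by
    have h1 : HasDerivAt (fun s => ∑ j, b j * x s j)
        (∑ j, b j * (-(a j) * x t j * Y)) t :=
      HasDerivAt.fun_sum fun j _ => (hx j t).const_mul (b j)
    have h2 : HasDerivAt (fun s => ∑ j, b j * y s j)
        (∑ j, b j * (a j * x t j * Y - γ * y t j)) t :=
      HasDerivAt.fun_sum fun j _ => (hy j t).const_mul (b j)
    have := h1.add h2
    refine this.congr_deriv ?_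
    rw [← Finset.sum_add_distrib, hY, Finset.mul_sum]
    congr 1
    ext j
    ring
  have hE : HasDerivAt (fun s => Real.exp (-(a i) * ((∑ j, b j * x s j) + (∑ j, b j * y s j)) / γ))
      (Real.exp (-(a i) * ((∑ j, b j * x t j) + (∑ j, b j * y t j)) / γ) * ((-(a i)) * (-γ * Y) / γ)) t := by
    have hlin : HasDerivAt (fun s => -(a i) * ((∑ j, b j * x s j) + (∑ j, b j * y s j)) / γ)
        ((-(a i)) * (-γ * Y) / γ) t := (hS.const_mul (-(a i))).div_const γ
    exact hlin.exp
  have := (hx i t).mul hE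
  refine this.congr_deriv ?_
  have : (-(a i)) * (-γ * Y) / γ = a i * Y := by field_simp
  rw [this]
  ring
end

section
/- In the rank-1 network SIR model, the quantity w_i = x̃ - γ - a_i ȳ satisfies the strict differential inequality w_i'(t) < -a_i ȳ(t) w_i(t) for all t ≥ 0, provided ȳ(t) > 0 and Σⱼ aⱼ²bⱼxⱼ(t) ≥ 0. -/
theorem stmt_10 (n : ℕ) (a b : Fin n → ℝ) (ha : ∀ i, 0 < a i) (hb : ∀ i, 0 < b i)
    (γ : ℝ) (hγ : 0 < γ)
    (x y : ℝ → Fin n → ℝ)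
    (hx : ∀ j t, HasDerivAt (fun s => x s j)
        (-(a j) * x t j * (∑ k, b k * y t k)) t)
    (hy : ∀ j t, HasDerivAt (fun s => y s j)
        (a j * x t j * (∑ k, b k * y t k) - γ * y t j) t)
    (hxnn : ∀ t ∈ Set.Ici (0:ℝ), ∀ j, 0 ≤ x t j)
    (hypos : ∀ t ∈ Set.Ici (0:ℝ), 0 < ∑ k, b k * y t k)
    (hq : ∀ t ∈ Set.Ici (0:ℝ), 0 ≤ ∑ j, (a j)^2 * b j * x t j)
    (i : Fin n) :
    ∀ t ∈ Set.Ici (0:ℝ),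
      HasDerivAt (fun s => (∑ j, a j * b j * x s j) - γ - a i * (∑ k, b k * y s k))
        (-(∑ k, b k * y t k) * (∑ j, (a j)^2 * b j * x t j)
          - a i * ((∑ k, b k * y t k) * ((∑ j, a j * b j * x t j) - γ))) t ∧
      -(∑ k, b k * y t k) * (∑ j, (a j)^2 * b j * x t j)
          - a i * ((∑ k, b k * y t k) * ((∑ j, a j * b j * x t j) - γ))
        < -(a i) * (∑ k, b k * y t k) *
            ((∑ j, a j * b j * x t j) - γ - a i * (∑ k, b k * y t k)) := by
  intro t ht
  constructor
  · have h1 : HasDerivAt (fun s => ∑ j, a j * b j * x s j)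
        (∑ j, a j * b j * (-(a j) * x t j * (∑ k, b k * y t k))) t :=
      HasDerivAt.fun_sum (fun j _ => (hx j t).const_mul (a j * b j))
    have h2 : HasDerivAt (fun s => ∑ k, b k * y s k)
        (∑ k, b k * (a k * x t k * (∑ l, b l * y t l) - γ * y t k)) t :=
      HasDerivAt.fun_sum (fun k _ => (hy k t).const_mul (b k))
    have h := ((h1.sub_const γ).sub (h2.const_mul (a i)))
    refine HasDerivAt.congr_deriv h ?_
    have e1 : ∑ j, a j * b j * (-(a j) * x t j * (∑ k, b k * y t k))
        = -(∑ k, b k * y t k) * (∑ j, (a j)^2 * b j * x t j) := by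
      rw [Finset.mul_sum]; apply Finset.sum_congr rfl; intro j _; ring
    have e2 : ∑ k, b k * (a k * x t k * (∑ l, b l * y t l) - γ * y t k)
        = (∑ k, b k * y t k) * (∑ j, a j * b j * x t j) - γ * (∑ k, b k * y t k) := by
      simp only [mul_sub]
      rw [Finset.sum_sub_distrib, Finset.mul_sum, Finset.mul_sum]
      congr 1
      · apply Finset.sum_congr rfl; intro j _; ring
      · apply Finset.sum_congr rfl; intro j _; ring
    rw [e1, e2]; ring
  · have hy' := hypos t ht
    have hq' := hq t ht
    have hai := ha i
    nlinarith [mul_nonneg hy'.le hq', mul_pos (mul_pos hai hy') (mul_pos hai hy')]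
end
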